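/- Let G be a finite simple graph with two adjacent vertices x and y that are true twins, i.e., N_G[x] = N_G[y]. Let Q be a clique cycle-transversal of the induced subgraph G − y on V(G) \ {y}, and suppose x ∉ Q. Then every induced (chordless) cycle of G containing no vertex of Q is a triangle with vertex set {x, y, a} for some common neighbor a of x and y with a ∉ Q. (This is the reduction in Case 1 of the proof of the main theorem: after adding a true twin, only the triangles xya need to be covered.) -/

import Mathlib

open SimpleGraph

/-- `G` is distance-hereditary: in every connected induced subgraph,
distances agree with those in `G`. -/
def DistanceHereditary {V : Type*} (G : SimpleGraph V) : Prop :=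
  ∀ S : Set V, (G.induce S).Connected →
    ∀ u v : S, (G.induce S).dist u v = G.dist u.1 v.1

/-- `G` contains `H` as an induced subgraph: there is an injection of the
vertices of `H` into those of `G` preserving adjacency and non-adjacency. -/
def ContainsInduced {α β : Type*} (H : SimpleGraph α) (G : SimpleGraph β) : Prop :=
  ∃ f : α → β, Function.Injective f ∧ ∀ a b : α, H.Adj a b ↔ G.Adj (f a) (f b)

/-- The house: vertices a,b,c,d,e = 0,1,2,3,4; edges ab,bc,cd,ad,ae,be. -/
def house : SimpleGraph (Fin 5) :=
  SimpleGraph.fromEdgeSet {s(0,1), s(1,2), s(2,3), s(0,3), s(0,4), s(1,4)}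

/-- The gem: vertices a,b,c,d,e = 0,1,2,3,4; edges ab,bc,cd,ae,be,ce,de. -/
def gem : SimpleGraph (Fin 5) :=
  SimpleGraph.fromEdgeSet {s(0,1), s(1,2), s(2,3), s(0,4), s(1,4), s(2,4), s(3,4)}

/-- The domino: vertices a,b,c,d,e,h = 0,1,2,3,4,5; edges ab,bc,cd,ad,be,eh,ch. -/
def domino : SimpleGraph (Fin 6) :=
  SimpleGraph.fromEdgeSet {s(0,1), s(1,2), s(2,3), s(0,3), s(1,4), s(4,5), s(2,5)}

/-- `G` is (house, hole, domino, gem)-free. A hole is an induced `C_n`, `n ≥ 5`. -/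
def HHDGFree {V : Type*} (G : SimpleGraph V) : Prop :=
  ¬ ContainsInduced house G ∧
  (∀ n : ℕ, 5 ≤ n → ¬ ContainsInduced (SimpleGraph.cycleGraph n) G) ∧
  ¬ ContainsInduced domino G ∧
  ¬ ContainsInduced gem G

/-- A stable (independent) set: pairwise non-adjacent vertices. -/
def IsStableSet {V : Type*} (G : SimpleGraph V) (s : Set V) : Prop :=
  s.Pairwise fun a b => ¬ G.Adj a b

/-- `T` is a cycle-transversal of `G`: every cycle of `G` contains a vertex of `T`. -/
def IsCycleTransversal {V : Type*} (G : SimpleGraph V) (T : Set V) : Prop :=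
  ∀ ⦃v : V⦄ (c : G.Walk v v), c.IsCycle → ∃ w ∈ c.support, w ∈ T

/-- A clique cycle-transversal (cct): a cycle-transversal that is a clique. -/
def IsCCT {V : Type*} (G : SimpleGraph V) (T : Set V) : Prop :=
  G.IsClique T ∧ IsCycleTransversal G T

open Walk

namespace CCTAux

variable {V : Type*} {G : SimpleGraph V}

/-- A walk whose support lies in `S` transfers to `G.induce S`. -/
def toInduce {S : Set V} : ∀ {a b : V} (w : G.Walk a b) (ha : a ∈ S) (hb : b ∈ S),
    (∀ v ∈ w.support, v ∈ S) → (G.induce S).Walk ⟨a, ha⟩ ⟨b, hb⟩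
  | _, _, Walk.nil, _, _, _ => Walk.nil
  | _, _, Walk.cons h p, ha, hb, hw =>
      Walk.cons (by simpa using h)
        (toInduce p (hw _ (by simp)) hb (fun v hv => hw v (by simp [hv])))

/-- The coercion homomorphism from `G.induce S` to `G`. -/
def vhom (G : SimpleGraph V) (S : Set V) : G.induce S →g G :=
  ⟨Subtype.val, fun h => by simpa using h⟩

lemma toInduce_map {S : Set V} : ∀ {a b : V} (w : G.Walk a b) (ha : a ∈ S) (hb : b ∈ S)
    (hw : ∀ v ∈ w.support, v ∈ S), (toInduce w ha hb hw).map (vhom G S) = w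
  | _, _, Walk.nil, _, _, _ => rfl
  | _, _, Walk.cons h p, ha, hb, hw => by
      simp only [toInduce, Walk.map_cons]
      congr 1
      exact toInduce_map p _ _ _

lemma toInduce_isCycle {S : Set V} {z : V} (w : G.Walk z z) (hz : z ∈ S)
    (hw : ∀ v ∈ w.support, v ∈ S) (hc : w.IsCycle) :
    (toInduce w hz hz hw).IsCycle := by
  rw [← SimpleGraph.Walk.map_isCycle_iff_of_injective
      (f := vhom G S) (p := toInduce w hz hz hw) Subtype.val_injective,
    toInduce_map]
  exact hc

lemma toInduce_support_mem {S : Set V} {a b : V} (w : G.Walk a b) (ha : a ∈ S) (hb : b ∈ S)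
    (hw : ∀ v ∈ w.support, v ∈ S) {z : S} (hz : z ∈ (toInduce w ha hb hw).support) :
    z.1 ∈ w.support := by
  have h1 : ((toInduce w ha hb hw).map (vhom G S)).support
      = (toInduce w ha hb hw).support.map (vhom G S) := Walk.support_map _ _
  rw [toInduce_map] at h1
  erw [h1]
  exact List.mem_map_of_mem hz

lemma path_head_edge {x u w : V} (q : G.Walk x w) (hq : q.IsPath) (he : s(x, u) ∈ q.edges) :
    ∃ (h : G.Adj x u) (r : G.Walk u w), q = Walk.cons h r := by
  cases q with
  | nil => simp at he
  | cons h r =>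
    rw [Walk.edges_cons, List.mem_cons] at he
    rcases he with he | he
    · rcases Sym2.eq_iff.mp he with ⟨-, rfl⟩ | ⟨h1, h2⟩
      · exact ⟨h, r, rfl⟩
      · exact absurd h1 h.ne
    · exact absurd (r.fst_mem_support_of_mem_edges he)
        ((Walk.cons_isPath_iff h r).mp hq).2

lemma mem_tail_of_closed {u w : V} (e : G.Walk u u) (hn : ¬ e.Nil) :
    w ∈ e.support ↔ w ∈ e.support.tail := by
  obtain ⟨u2, h2, q, rfl⟩ := Walk.not_nil_iff.mp hn
  simp only [Walk.support_cons, List.tail_cons, List.mem_cons]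
  constructor
  · rintro (rfl | h3)
    · exact q.end_mem_support
    · exact h3
  · exact Or.inr

lemma mem_support_rotate_iff [DecidableEq V] {u v w : V} {c : G.Walk v v} (hc : c.IsCycle) (h : u ∈ c.support) :
    w ∈ (c.rotate u h).support ↔ w ∈ c.support := by
  rw [mem_tail_of_closed _ (hc.rotate h).not_nil, mem_tail_of_closed _ hc.not_nil,
    (Walk.support_rotate c u h).perm.mem_iff]

lemma isCycle_reverse {u : V} {e : G.Walk u u} (he : e.IsCycle) : e.reverse.IsCycle := by
  obtain ⟨w, h, p, rfl⟩ := Walk.not_nil_iff.mp he.not_nil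
  have hp : p.IsPath := ((Walk.cons_isCycle_iff p h).mp he).1
  refine ⟨⟨Walk.IsTrail.reverse _ he.isCircuit.isTrail, ?_⟩, ?_⟩
  · intro hn
    exact he.ne_nil (by rw [← Walk.reverse_reverse (Walk.cons h p), hn, Walk.reverse_nil])
  · have hts : (Walk.cons h p).reverse.support.tail
        = p.reverse.support.tail ++ [u] := by
      rw [Walk.reverse_cons, Walk.support_append, Walk.support_eq_cons p.reverse]
      simp
    rw [hts]
    have h2 := hp.reverse.support_nodup
    rw [Walk.support_eq_cons] at h2
    simp only [List.nodup_cons] at h2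
    refine List.Nodup.append h2.2 (List.nodup_singleton u) ?_
    intro a ha hb
    rw [List.mem_singleton] at hb
    subst hb
    exact h2.1 ha

lemma cycle_head {x y : V} (e : G.Walk x x) (he : e.IsCycle) (hxy : s(x, y) ∈ e.edges) :
    ∃ (h : G.Adj x y) (r : G.Walk y x),
      (Walk.cons h r).IsCycle ∧ (∀ w, w ∈ (Walk.cons h r).support ↔ w ∈ e.support) ∧
      (∀ f, f ∈ (Walk.cons h r).edges ↔ f ∈ e.edges) := by
  obtain ⟨w, hxw, p, rfl⟩ := Walk.not_nil_iff.mp he.not_nil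
  rw [Walk.edges_cons, List.mem_cons] at hxy
  rcases hxy with heq | hmem
  · have : y = w := by
      rcases Sym2.eq_iff.mp heq with ⟨-, h⟩ | ⟨h1, -⟩
      · exact h
      · exact absurd h1 hxw.ne
    subst this
    exact ⟨hxw, p, he, fun _ => Iff.rfl, fun _ => Iff.rfl⟩
  · have hp : p.IsPath := ((Walk.cons_isCycle_iff p hxw).mp he).1
    have hmem' : s(x, y) ∈ p.reverse.edges := by
      rw [Walk.edges_reverse, List.mem_reverse]; exact hmem
    obtain ⟨hxy, r', hdecomp⟩ := path_head_edge p.reverse hp.reverse hmem'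
    have hrev : (Walk.cons hxw p).reverse
        = Walk.cons hxy (r'.append (Walk.cons hxw.symm Walk.nil)) := by
      rw [Walk.reverse_cons, hdecomp, Walk.cons_append]
    refine ⟨hxy, r'.append (Walk.cons hxw.symm Walk.nil), ?_, ?_, ?_⟩
    · rw [← hrev]; exact isCycle_reverse he
    · intro w2; rw [← hrev, Walk.support_reverse, List.mem_reverse]
    · intro f; rw [← hrev, Walk.edges_reverse, List.mem_reverse]

lemma not_nil_of_ne' {a b : V} (p : G.Walk a b) (h : a ≠ b) : ¬ p.Nil := by
  cases p with
  | nil => exact absurd rfl h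
  | cons h q => exact Walk.not_nil_cons

end CCTAux

open CCTAux Walk

/-- after adding a true twin `y` of `x`, if `Q` is a cct of `G - y`
with `x ∉ Q`, then every induced cycle of `G` avoiding `Q` is a triangle `{x, y, a}`
for a common neighbor `a ∉ Q` of `x` and `y`. -/
theorem induced_cycles_avoiding_Q_are_triangles {V : Type*} [Fintype V]
    (G : SimpleGraph V) (x y : V)
    (hadj : G.Adj x y)
    (htwin : insert x (G.neighborSet x) = insert y (G.neighborSet y))
    (Q : Set V) (hyQ : y ∉ Q) (hxQ : x ∉ Q)
    (hQ : IsCCT (G.induce {y}ᶜ) (Subtype.val ⁻¹' Q)) :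
    ∀ (v : V) (c : G.Walk v v), c.IsCycle →
      (∀ a ∈ c.support, ∀ b ∈ c.support, G.Adj a b → s(a, b) ∈ c.edges) →
      (∀ w ∈ c.support, w ∉ Q) →
      ∃ a : V, G.Adj x a ∧ G.Adj y a ∧ a ∉ Q ∧
        {w : V | w ∈ c.support} = ({x, y, a} : Set V) := by
  classical
  have twinAdj : ∀ w : V, w ≠ x → G.Adj y w → G.Adj x w := by
    intro w hwx hyw
    have hw : w ∈ insert x (G.neighborSet x) := by
      rw [htwin]; exact Set.mem_insert_iff.mpr (Or.inr hyw)
    rcases Set.mem_insert_iff.mp hw with rfl | hw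
    · exact absurd rfl hwx
    · exact hw
  intro v c hc hind havoid
  -- any cycle avoiding y and Q contradicts the cct property of G - y
  have key : ∀ (z : V) (e : G.Walk z z), e.IsCycle → y ∉ e.support →
      (∀ w ∈ e.support, w ∉ Q) → False := by
    intro z e he hey heQ
    have hsub : ∀ w ∈ e.support, w ∈ ({y}ᶜ : Set V) := by
      intro w hw
      simp only [Set.mem_compl_iff, Set.mem_singleton_iff]
      rintro rfl; exact hey hw
    obtain ⟨w, hws, hwQ⟩ := hQ.2 (toInduce e (hsub z e.start_mem_support)
      (hsub z e.start_mem_support) hsub) (toInduce_isCycle e _ hsub he)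
    exact heQ w.1 (toInduce_support_mem e _ _ hsub hws) hwQ
  -- Step 1 : y lies on c
  have hy : y ∈ c.support := by
    by_contra hy
    exact key v c hc hy havoid
  -- Step 2 : x lies on c
  have hx : x ∈ c.support := by
    by_contra hx
    have hd : (c.rotate y hy).IsCycle := hc.rotate hy
    have hds : ∀ w, w ∈ (c.rotate y hy).support ↔ w ∈ c.support :=
      fun w => CCTAux.mem_support_rotate_iff hc hy
    obtain ⟨w, hyw, p, hdef⟩ := Walk.not_nil_iff.mp hd.not_nil
    have hp : p.IsPath := ((Walk.cons_isCycle_iff p hyw).mp (hdef ▸ hd)).1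
    have hpsup : ∀ z ∈ p.support, z ∈ c.support := by
      intro z hz
      rw [← hds]; rw [hdef]
      simp [hz]
    have hrnn : ¬ p.reverse.Nil := not_nil_of_ne' _ (fun h => hyw.ne' h.symm)
    obtain ⟨u, hyu, r, hrev⟩ := Walk.not_nil_iff.mp hrnn
    have hpr : p.reverse.IsPath := hp.reverse
    have hrpath : r.IsPath ∧ y ∉ r.support := by
      rw [hrev, Walk.cons_isPath_iff] at hpr
      exact ⟨hpr.1, hpr.2⟩
    have hrsup : ∀ z ∈ r.support, z ∈ c.support := by
      intro z hz
      apply hpsup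
      have hz2 : z ∈ p.reverse.support := by rw [hrev]; simp [hz]
      rwa [Walk.support_reverse, List.mem_reverse] at hz2
    have hxr : x ∉ r.support := fun h => hx (hrsup x h)
    have hxw : G.Adj x w := twinAdj w
      (fun h => hx (h ▸ hpsup w p.start_mem_support)) hyw
    have hxu : G.Adj x u := twinAdj u
      (fun h => hx (h ▸ hrsup u r.start_mem_support)) hyu
    have hwu : w ≠ u := by
      rintro rfl
      have hr0 : r = Walk.nil := (Walk.isPath_iff_eq_nil (p := r)).mp hrpath.1
      have hp2 : p = Walk.cons hyu.symm Walk.nil := by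
        rw [← Walk.reverse_reverse p, hrev, hr0]
        simp [Walk.reverse_cons]
      have hnd := (hdef ▸ hd).isCircuit.isTrail.edges_nodup
      rw [hp2] at hnd
      simp [Sym2.eq_swap] at hnd
    refine key x (Walk.cons hxw (Walk.cons hxu r).reverse) ?_ ?_ ?_
    · refine ⟨⟨⟨?_⟩, by simp⟩, ?_⟩
      · rw [Walk.edges_cons, Walk.edges_reverse, Walk.edges_cons]
        have hrn : r.edges.Nodup := hrpath.1.isTrail.edges_nodup
        have hxw' : s(x, w) ∉ r.edges := fun h => hxr (r.fst_mem_support_of_mem_edges h)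
        have hxu' : s(x, u) ∉ r.edges := fun h => hxr (r.fst_mem_support_of_mem_edges h)
        refine List.nodup_cons.mpr ⟨?_, ?_⟩
        · simp only [List.reverse_cons, List.mem_append, List.mem_reverse,
            List.mem_singleton]
          rintro (h | h)
          · exact hxw' h
          · rcases Sym2.eq_iff.mp h with ⟨-, h2⟩ | ⟨h1, -⟩
            · exact hwu h2
            · exact hxu.ne h1
        · simp only [List.reverse_cons]
          refine List.Nodup.append (by rwa [List.nodup_reverse]) (List.nodup_singleton _) ?_
          intro e he1 he2
          rw [List.mem_singleton] at he2
          subst he2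
          rw [List.mem_reverse] at he1
          exact hxu' he1
      · rw [Walk.support_cons, List.tail_cons, Walk.support_reverse, Walk.support_cons]
        simp only [List.reverse_cons]
        refine List.Nodup.append ?_ (List.nodup_singleton _) ?_
        · rw [List.nodup_reverse]; exact hrpath.1.support_nodup
        · intro a ha hb
          rw [List.mem_singleton] at hb
          subst hb
          rw [List.mem_reverse] at ha
          exact hxr ha
    · rw [Walk.support_cons, Walk.support_reverse, Walk.support_cons]
      simp only [List.mem_cons, List.reverse_cons, List.mem_append, List.mem_reverse,
        List.mem_singleton, List.not_mem_nil, or_false]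
      rintro (h | h | h)
      · exact hadj.ne' h
      · exact hrpath.2 h
      · exact hadj.ne' h
    · intro z hz
      rw [Walk.support_cons, Walk.support_reverse, Walk.support_cons] at hz
      simp only [List.mem_cons, List.reverse_cons, List.mem_append, List.mem_reverse,
        List.mem_singleton, List.not_mem_nil, or_false] at hz
      rcases hz with rfl | h | rfl
      · exact hxQ
      · exact havoid z (hrsup z h)
      · exact hxQ
  -- Step 3 : the edge xy is on c
  have hxye : s(x, y) ∈ c.edges := hind x hx y hy hadj
  -- Step 4 : structure of the cycle
  have hd : (c.rotate x hx).IsCycle := hc.rotate hx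
  have hds : ∀ w, w ∈ (c.rotate x hx).support ↔ w ∈ c.support :=
    fun w => CCTAux.mem_support_rotate_iff hc hx
  have hde : ∀ f, f ∈ (c.rotate x hx).edges ↔ f ∈ c.edges :=
    fun f => (Walk.rotate_edges c x hx).perm.mem_iff
  obtain ⟨hxy, p, hec, hesup, heedg⟩ := cycle_head (c.rotate x hx) hd ((hde _).mpr hxye)
  have hp : p.IsPath ∧ s(x, y) ∉ p.edges := (Walk.cons_isCycle_iff p hxy).mp hec
  have hpnn : ¬ p.Nil := not_nil_of_ne' _ hadj.ne'
  obtain ⟨a, hya, r, rfl⟩ := Walk.not_nil_iff.mp hpnn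
  have hr : r.IsPath ∧ y ∉ r.support := by
    have h1 := hp.1
    rw [Walk.cons_isPath_iff] at h1
    exact ⟨h1.1, h1.2⟩
  have hmemsup : ∀ z ∈ r.support, z ∈ c.support := by
    intro z hz
    exact (hds z).mp ((hesup z).mp (by simp [hz]))
  have hax : a ≠ x := by
    rintro rfl
    have hr0 : r = Walk.nil := (Walk.isPath_iff_eq_nil (p := r)).mp hr.1
    subst hr0
    have hnd := hec.isCircuit.isTrail.edges_nodup
    simp [Sym2.eq_swap] at hnd
  have hxa : G.Adj x a := twinAdj a hax hya
  have hac : a ∈ c.support := hmemsup a r.start_mem_support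
  have hxae : s(x, a) ∈ c.edges := hind x hx a hac hxa
  have hxae2 : s(x, a) ∈ r.edges := by
    have h0 : s(x, a) ∈ (Walk.cons hxy (Walk.cons hya r)).edges :=
      (heedg _).mpr ((hde _).mpr hxae)
    simp only [Walk.edges_cons, List.mem_cons] at h0
    rcases h0 with h1 | h1 | h1
    · exfalso
      rcases Sym2.eq_iff.mp h1 with ⟨-, h2⟩ | ⟨h2, -⟩
      · exact hya.ne' h2
      · exact hadj.ne h2
    · exfalso
      rcases Sym2.eq_iff.mp h1 with ⟨h2, -⟩ | ⟨h2, -⟩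
      · exact hadj.ne h2
      · exact hax h2.symm
    · exact h1
  have hmr : s(x, a) ∈ r.reverse.edges := by
    rw [Walk.edges_reverse, List.mem_reverse]; exact hxae2
  obtain ⟨hxa', t, ht⟩ := path_head_edge r.reverse hr.1.reverse hmr
  have htnil : t = Walk.nil := by
    have h1 := hr.1.reverse
    rw [ht, Walk.cons_isPath_iff] at h1
    exact (Walk.isPath_iff_eq_nil (p := t)).mp h1.1
  subst htnil
  have hrsup : r.support = [a, x] := by
    have h1 : r.support.reverse = [x, a] := by
      rw [← Walk.support_reverse, ht]
      simp
    have h2 := congrArg List.reverse h1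
    rwa [List.reverse_reverse] at h2
  refine ⟨a, hxa, hya, havoid a hac, ?_⟩
  ext z
  simp only [Set.mem_setOf_eq, Set.mem_insert_iff, Set.mem_singleton_iff]
  rw [show (z ∈ c.support) ↔ z ∈ (Walk.cons hxy (Walk.cons hya r)).support from
    ((hesup z).trans (hds z)).symm]
  rw [Walk.support_cons, Walk.support_cons, hrsup]
  simp only [List.mem_cons, List.mem_singleton, List.not_mem_nil, or_false]
  tauto
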